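/- For every positive integer n, E_{−n}^k(x) = E_n^k(−x) + (k/(n+k))·E_n^k(x). -/

import Mathlib

/-- The dominance-type partial order on `ℤ` used to define the non-symmetric
Heckman–Opdam polynomials of type `A₁`. -/
def hoOrd (j n : ℤ) : Prop := (|j| < |n| ∧ 2 ∣ (|n| - |j|)) ∨ (|j| = |n| ∧ n < j)

instance : ∀ j n : ℤ, Decidable (hoOrd j n) := fun j n => by unfold hoOrd; infer_instance

lemma hoOrd_le {j m : ℤ} (h : hoOrd j m) : |j| ≤ |m| := by
  unfold hoOrd at h; rcases h with ⟨h, _⟩ | ⟨h, _⟩ <;> omega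

lemma expsum_coeffs (s : Finset ℤ) (b : ℤ → ℂ) (N : ℤ) (hN : ∀ j ∈ s, 0 ≤ j + N)
    (h : ∀ x : ℂ, Complex.exp (-2*x) ≠ 1 → ∑ j ∈ s, b j * Complex.exp ((j:ℂ)*x) = 0) :
    ∀ j ∈ s, b j = 0 := by
  set P : Polynomial ℂ := ∑ j ∈ s, Polynomial.C (b j) * Polynomial.X ^ (j+N).toNat with hP
  have hroot : ∀ w : ℂ, w ≠ 0 → w^2 ≠ 1 → P.eval w = 0 := by
    intro w hw hw2
    have hw' : w ∈ Set.range Complex.exp := by rw [Complex.range_exp]; exact hw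
    obtain ⟨x, hx⟩ := hw'
    have hxe : Complex.exp (-2*x) ≠ 1 := by
      have : Complex.exp (-2*x) = w ^ (-2 : ℤ) := by
        rw [← hx]
        rw [show ((-2:ℂ)) = ((-2 : ℤ) : ℂ) by norm_num, Complex.exp_int_mul]
      rw [this]
      simp only [zpow_neg, ne_eq, inv_eq_one]
      intro hcon
      apply hw2
      have : w ^ ((2:ℤ)) = 1 := by exact_mod_cast hcon
      exact_mod_cast this
    have hsum := h x hxe
    have : P.eval w = (∑ j ∈ s, b j * w ^ (j : ℤ)) * w ^ N := by
      rw [hP, Polynomial.eval_finset_sum, Finset.sum_mul]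
      refine Finset.sum_congr rfl ?_
      intro j hj
      rw [Polynomial.eval_mul, Polynomial.eval_C, Polynomial.eval_pow, Polynomial.eval_X,
        ← zpow_natCast w, Int.toNat_of_nonneg (hN j hj), zpow_add₀ hw, mul_assoc]
    rw [this]
    have : (∑ j ∈ s, b j * w ^ (j : ℤ)) = 0 := by
      rw [← hsum]
      refine Finset.sum_congr rfl ?_
      intro j hj
      rw [← hx, Complex.exp_int_mul]
    rw [this, zero_mul]
  have hP0 : P = 0 := by
    apply Polynomial.eq_zero_of_infinite_isRoot
    have hsub : {w : ℂ | w ≠ 0 ∧ w^2 ≠ 1} ⊆ {x | P.IsRoot x} := by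
      intro w hw; exact hroot w hw.1 hw.2
    refine Set.Infinite.mono hsub ?_
    have hfin : ({w : ℂ | ¬(w ≠ 0 ∧ w^2 ≠ 1)}).Finite := by
      apply Set.Finite.subset (show ({0, 1, -1} : Set ℂ).Finite by
        exact (Set.finite_singleton (-1)).insert 1 |>.insert 0)
      intro w hw
      simp only [Set.mem_setOf_eq, not_and_or, not_not, ne_eq] at hw
      simp only [Set.mem_insert_iff, Set.mem_singleton_iff]
      rcases hw with h0 | h1
      · exact Or.inl h0
      · have : (w - 1) * (w + 1) = 0 := by linear_combination h1
        rcases mul_eq_zero.1 this with h | h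
        · exact Or.inr (Or.inl (by linear_combination h))
        · exact Or.inr (Or.inr (by linear_combination h))
    have := hfin.infinite_compl
    convert this using 1
    ext w; simp [Set.mem_compl_iff]
  intro j0 hj0
  have := congrArg (fun p => Polynomial.coeff p (j0 + N).toNat) hP0
  simp only [hP, Polynomial.finset_sum_coeff, Polynomial.coeff_C_mul, Polynomial.coeff_X_pow,
    Polynomial.coeff_zero] at this
  rw [← this]
  rw [Finset.sum_congr rfl (fun j hj => ?_), Finset.sum_ite_eq' s j0 b]
  · simp [hj0]
  · have h1 : ((j0+N).toNat = (j+N).toNat) ↔ j = j0 := by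
      have := hN j hj; have := hN j0 hj0; omega
    by_cases hc : j = j0
    · simp [hc]
    · simp [hc, h1, (h1.not.2 hc)]

lemma alg (K N p q d1 d2 d2m s1 s1m s2 s2m : ℂ)
    (hpq : p * q = 1) (hp : 1 - p ≠ 0) (hq : 1 - q ≠ 0) (hNK : N + K ≠ 0)
    (h1 : d1 + 2*K*(s1 - s1m)/(1-p) - K*s1 = (-N - K)*s1)
    (h2 : d2 + 2*K*(s2 - s2m)/(1-p) - K*s2 = (N+K)*s2)
    (h3 : d2m + 2*K*(s2m - s2)/(1-q) - K*s2m = (N+K)*s2m) :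
    (1-p) * ((d1 + d2m - (K/(N+K))*d2) + N*(s1 - s2m - (K/(N+K))*s2))
      + 2*K*((s1 - s2m - (K/(N+K))*s2) - (s1m - s2 - (K/(N+K))*s2m)) = 0 := by
  have A : (1-p)*(d1 + N*s1) + 2*K*(s1 - s1m) = 0 := by
    have := congrArg (· * (1-p)) h1
    field_simp at this
    linear_combination this
  have B : (1-p)*(d2 - (N+2*K)*s2) + 2*K*(s2 - s2m) = 0 := by
    have := congrArg (· * (1-p)) h2
    field_simp at this
    linear_combination this
  have C : (1-q)*(d2m - (N+2*K)*s2m) + 2*K*(s2m - s2) = 0 := by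
    have := congrArg (· * (1-q)) h3
    field_simp at this
    linear_combination this
  have hc : (K/(N+K)) * (N+K) = K := div_mul_cancel₀ K hNK
  field_simp
  linear_combination (N+K)*A - K*B - (N+K)*p*C + ((N+K)*((N+2*K)*s2m - d2m))*hpq

lemma hasDerivAt_cexp_mul (a x : ℂ) :
    HasDerivAt (fun z => Complex.exp (a*z)) (a * Complex.exp (a*x)) x := by
  have h := (Complex.hasDerivAt_exp (a*x)).comp x ((hasDerivAt_id x).const_mul a)
  simpa [mul_comm, Function.comp_def] using h

lemma hasDerivAt_expsum (s : Finset ℤ) (t : ℤ → ℂ) (a x : ℂ) :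
    HasDerivAt (fun z => Complex.exp (a*z) + ∑ j ∈ s, t j * Complex.exp ((j:ℂ)*z))
      (a * Complex.exp (a*x) + ∑ j ∈ s, t j * ((j:ℂ) * Complex.exp ((j:ℂ)*x))) x := by
  exact (hasDerivAt_cexp_mul a x).add
    (HasDerivAt.fun_sum (fun j _ => (hasDerivAt_cexp_mul (j:ℂ) x).const_mul (t j)))

lemma sum_neg_Icc (M : ℤ) (G : ℤ → ℂ) :
    ∑ j ∈ Finset.Icc (-M) M, G (-j) = ∑ j ∈ Finset.Icc (-M) M, G j := by
  refine Finset.sum_nbij' (fun j => -j) (fun j => -j) ?_ ?_ ?_ ?_ ?_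
  · intro w hw; simp only [Finset.mem_Icc] at *; omega
  · intro w hw; simp only [Finset.mem_Icc] at *; omega
  · intro w _; show -(-w) = w; omega
  · intro w _; show -(-w) = w; omega
  · intro w _; rfl

lemma sum_shift (lo hi : ℤ) (F : ℤ → ℂ) :
    ∑ j ∈ Finset.Icc lo hi, F j = ∑ m ∈ Finset.Icc (lo-2) (hi-2), F (m+2) := by
  refine Finset.sum_nbij' (fun j => j - 2) (fun m => m + 2) ?_ ?_ ?_ ?_ ?_
  · intro w hw; simp only [Finset.mem_Icc] at *; omega
  · intro w hw; simp only [Finset.mem_Icc] at *; omega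
  · intro w _; show w - 2 + 2 = w; omega
  · intro w _; show w + 2 - 2 = w; omega
  · intro w _; show F w = F (w - 2 + 2); congr 1; omega

theorem stmt2 (k : ℝ) (hk : 0 ≤ k) (E : ℤ → ℂ → ℂ) (c : ℤ → ℤ → ℂ)
    (hform : ∀ (n : ℤ) (z : ℂ), E n z = Complex.exp ((n : ℂ) * z) +
      ∑ j ∈ (Finset.Icc (-|n|) |n|).filter (fun j => hoOrd j n),
        c n j * Complex.exp ((j : ℂ) * z))
    (heig : ∀ (n : ℤ) (x : ℂ), Complex.exp (-2 * x) ≠ 1 →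
      deriv (E n) x + 2 * (k : ℂ) * (E n x - E n (-x)) / (1 - Complex.exp (-2 * x))
          - (k : ℂ) * E n x
        = (if 0 < n then (n : ℂ) + (k : ℂ) else (n : ℂ) - (k : ℂ)) * E n x) :
    ∀ n : ℤ, 1 ≤ n → ∀ x : ℂ,
      E (-n) x = E n (-x) + ((k : ℂ) / ((n : ℂ) + (k : ℂ))) * E n x := by
  intro n hn
  have habs : |n| = n := abs_of_pos (by omega)
  have habsneg : |(-n)| = n := by rw [abs_neg, habs]
  have hn1 : (1:ℝ) ≤ (n:ℝ) := by exact_mod_cast hn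
  have hnk : (n:ℂ) + (k:ℂ) ≠ 0 := by
    have h : ((n:ℝ) + k : ℝ) ≠ 0 := by linarith
    have e : (n:ℂ) + (k:ℂ) = (((n:ℝ) + k : ℝ) : ℂ) := by push_cast; ring
    rw [e]; exact_mod_cast Complex.ofReal_ne_zero.mpr h
  set c0 : ℂ := (k:ℂ)/((n:ℂ)+(k:ℂ)) with hc0
  set t1 : ℤ → ℂ := fun j => if hoOrd j (-n) then c (-n) j else 0 with ht1
  set t4 : ℤ → ℂ := fun j => if hoOrd j n then c n j else 0 with ht4
  set a : ℤ → ℂ := fun j => t1 j - t4 (-j) - (if j = n then c0 else 0) - c0 * t4 j with ha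
  set B : Finset ℤ := Finset.Icc (-(n+4)) (n+4) with hB
  have hsubB : Finset.Icc (-n) n ⊆ B := Finset.Icc_subset_Icc (by omega) (by omega)
  have hnB : n ∈ B := by rw [hB, Finset.mem_Icc]; omega
  -- vanishing outside the core
  have ht1_out : ∀ j : ℤ, n < |j| → t1 j = 0 := by
    intro j hj; rw [ht1]; simp only
    rw [if_neg]; intro hh; have := hoOrd_le hh; omega
  have ht4_out : ∀ j : ℤ, n < |j| → t4 j = 0 := by
    intro j hj; rw [ht4]; simp only
    rw [if_neg]; intro hh; have := hoOrd_le hh; omega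
  have ha_out : ∀ j : ℤ, n < |j| → a j = 0 := by
    intro j hj
    have h1 := ht1_out j hj
    have h2 := ht4_out (-j) (by rw [abs_neg]; omega)
    have h3 := ht4_out j hj
    have h4 : j ≠ n := by rintro rfl; omega
    rw [ha]; simp only [h1, h2, h3, if_neg h4]; ring
  -- explicit forms over B
  have hE1 : ∀ z : ℂ, E (-n) z
      = Complex.exp (-(n:ℂ)*z) + ∑ j ∈ B, t1 j * Complex.exp ((j:ℂ)*z) := by
    intro z
    rw [hform (-n) z, habsneg]
    congr 1
    · congr 1; push_cast; ring
    · rw [Finset.sum_filter]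
      rw [Finset.sum_subset hsubB (fun j hj hj2 => by
        have : ¬ hoOrd j (-n) := by
          intro hh; have := hoOrd_le hh
          rw [Finset.mem_Icc] at hj2
          have := le_abs_self j; have := neg_abs_le j; omega
        simp [this])]
      refine Finset.sum_congr rfl (fun j _ => ?_)
      rw [ht1]; simp only; split_ifs <;> simp
  have hE2 : ∀ z : ℂ, E n z
      = Complex.exp ((n:ℂ)*z) + ∑ j ∈ B, t4 j * Complex.exp ((j:ℂ)*z) := by
    intro z
    rw [hform n z, habs]
    congr 1
    rw [Finset.sum_filter]
    rw [Finset.sum_subset hsubB (fun j hj hj2 => by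
      have : ¬ hoOrd j n := by
        intro hh; have := hoOrd_le hh
        rw [Finset.mem_Icc] at hj2
        have := le_abs_self j; have := neg_abs_le j; omega
      simp [this])]
    refine Finset.sum_congr rfl (fun j _ => ?_)
    rw [ht4]; simp only; split_ifs <;> simp
  -- derivatives
  have hd1 : ∀ z : ℂ, deriv (E (-n)) z
      = -(n:ℂ) * Complex.exp (-(n:ℂ)*z) + ∑ j ∈ B, t1 j * ((j:ℂ) * Complex.exp ((j:ℂ)*z)) := by
    intro z
    have : E (-n) = fun z => Complex.exp (-(n:ℂ)*z) + ∑ j ∈ B, t1 j * Complex.exp ((j:ℂ)*z) :=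
      funext hE1
    rw [this]
    exact (hasDerivAt_expsum B t1 (-(n:ℂ)) z).deriv
  have hd2 : ∀ z : ℂ, deriv (E n) z
      = (n:ℂ) * Complex.exp ((n:ℂ)*z) + ∑ j ∈ B, t4 j * ((j:ℂ) * Complex.exp ((j:ℂ)*z)) := by
    intro z
    have : E n = fun z => Complex.exp ((n:ℂ)*z) + ∑ j ∈ B, t4 j * Complex.exp ((j:ℂ)*z) :=
      funext hE2
    rw [this]
    exact (hasDerivAt_expsum B t4 ((n:ℂ)) z).deriv
  -- the difference as an exponential sum
  have Dsum : ∀ z : ℂ, E (-n) z - E n (-z) - c0 * E n z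
      = ∑ j ∈ B, a j * Complex.exp ((j:ℂ)*z) := by
    intro z
    rw [hE1 z, hE2 (-z), hE2 z]
    have hre : ∑ j ∈ B, t4 j * Complex.exp ((j:ℂ)*(-z))
        = ∑ j ∈ B, t4 (-j) * Complex.exp ((j:ℂ)*z) := by
      refine Finset.sum_nbij' (fun w => -w) (fun w => -w) ?_ ?_ ?_ ?_ ?_
      · intro w hw; simp only [hB, Finset.mem_Icc] at hw ⊢; omega
      · intro w hw; simp only [hB, Finset.mem_Icc] at hw ⊢; omega
      · intro w _; show -(-w) = w; omega
      · intro w _; show -(-w) = w; omega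
      · intro w _
        show t4 w * Complex.exp ((w:ℂ)*(-z)) = t4 (-(-w)) * Complex.exp (((-w : ℤ):ℂ)*z)
        rw [neg_neg]; push_cast
        congr 1; ring
    rw [hre]
    have hite : ∑ j ∈ B, (if j = n then c0 else 0) * Complex.exp ((j:ℂ)*z)
        = c0 * Complex.exp ((n:ℂ)*z) := by
      rw [Finset.sum_congr rfl (fun j _ => by
        split_ifs with h
        · subst h; rfl
        · rw [zero_mul]
        : ∀ j ∈ B, (if j = n then c0 else 0) * Complex.exp ((j:ℂ)*z)
            = if j = n then c0 * Complex.exp ((n:ℂ)*z) else 0)]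
      rw [Finset.sum_ite_eq' B n (fun _ => c0 * Complex.exp ((n:ℂ)*z)), if_pos hnB]
    have hexp : Complex.exp ((n:ℂ)*(-z)) = Complex.exp (-(n:ℂ)*z) := by congr 1; ring
    rw [hexp]
    have expand : ∑ j ∈ B, a j * Complex.exp ((j:ℂ)*z)
        = ∑ j ∈ B, t1 j * Complex.exp ((j:ℂ)*z)
          - ∑ j ∈ B, t4 (-j) * Complex.exp ((j:ℂ)*z)
          - ∑ j ∈ B, (if j = n then c0 else 0) * Complex.exp ((j:ℂ)*z)
          - c0 * ∑ j ∈ B, t4 j * Complex.exp ((j:ℂ)*z) := by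
      rw [Finset.mul_sum, ← Finset.sum_sub_distrib, ← Finset.sum_sub_distrib,
        ← Finset.sum_sub_distrib]
      refine Finset.sum_congr rfl (fun j _ => ?_)
      rw [ha]; simp only; ring
    rw [expand, hite]
    ring
  -- derivative combination as an exponential sum
  have Dsum' : ∀ z : ℂ, deriv (E (-n)) z + deriv (E n) (-z) - c0 * deriv (E n) z
      = ∑ j ∈ B, a j * ((j:ℂ) * Complex.exp ((j:ℂ)*z)) := by
    intro z
    rw [hd1 z, hd2 (-z), hd2 z]
    have hre : ∑ j ∈ B, t4 j * ((j:ℂ) * Complex.exp ((j:ℂ)*(-z)))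
        = ∑ j ∈ B, t4 (-j) * (-(j:ℂ) * Complex.exp ((j:ℂ)*z)) := by
      refine Finset.sum_nbij' (fun w => -w) (fun w => -w) ?_ ?_ ?_ ?_ ?_
      · intro w hw; simp only [hB, Finset.mem_Icc] at hw ⊢; omega
      · intro w hw; simp only [hB, Finset.mem_Icc] at hw ⊢; omega
      · intro w _; show -(-w) = w; omega
      · intro w _; show -(-w) = w; omega
      · intro w _
        show t4 w * ((w:ℂ) * Complex.exp ((w:ℂ)*(-z)))
            = t4 (-(-w)) * (-((-w : ℤ):ℂ) * Complex.exp (((-w : ℤ):ℂ)*z))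
        rw [neg_neg]; push_cast
        rw [show -(-(w:ℂ)) * Complex.exp (-(w:ℂ)*z) = (w:ℂ) * Complex.exp (-(w:ℂ)*z) by ring]
        congr 2; ring
    rw [hre]
    have hite : ∑ j ∈ B, (if j = n then c0 else 0) * ((j:ℂ) * Complex.exp ((j:ℂ)*z))
        = c0 * ((n:ℂ) * Complex.exp ((n:ℂ)*z)) := by
      rw [Finset.sum_congr rfl (fun j _ => by
        split_ifs with h
        · subst h; rfl
        · rw [zero_mul]
        : ∀ j ∈ B, (if j = n then c0 else 0) * ((j:ℂ) * Complex.exp ((j:ℂ)*z))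
            = if j = n then c0 * ((n:ℂ) * Complex.exp ((n:ℂ)*z)) else 0)]
      rw [Finset.sum_ite_eq' B n (fun _ => c0 * ((n:ℂ) * Complex.exp ((n:ℂ)*z))), if_pos hnB]
    have hexp : Complex.exp ((n:ℂ)*(-z)) = Complex.exp (-(n:ℂ)*z) := by congr 1; ring
    rw [hexp]
    have expand : ∑ j ∈ B, a j * ((j:ℂ) * Complex.exp ((j:ℂ)*z))
        = ∑ j ∈ B, t1 j * ((j:ℂ) * Complex.exp ((j:ℂ)*z))
          + ∑ j ∈ B, t4 (-j) * (-(j:ℂ) * Complex.exp ((j:ℂ)*z))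
          - ∑ j ∈ B, (if j = n then c0 else 0) * ((j:ℂ) * Complex.exp ((j:ℂ)*z))
          - c0 * ∑ j ∈ B, t4 j * ((j:ℂ) * Complex.exp ((j:ℂ)*z)) := by
      rw [Finset.mul_sum, ← Finset.sum_add_distrib, ← Finset.sum_sub_distrib,
        ← Finset.sum_sub_distrib]
      refine Finset.sum_congr rfl (fun j _ => ?_)
      rw [ha]; simp only; ring
    rw [expand, hite]
    ring
  -- the recurrence coefficients
  set b : ℤ → ℂ := fun m => a m * ((m:ℂ) + (n:ℂ) + 2*(k:ℂ))
      - a (m+2) * ((m:ℂ) + (n:ℂ) + 2) - 2*(k:ℂ) * a (-m) with hb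
  have hkey : ∀ z : ℂ, Complex.exp (-2*z) ≠ 1 →
      ∑ m ∈ B, b m * Complex.exp ((m:ℂ)*z) = 0 := by
    intro z hz
    have hpq : Complex.exp (-2*z) * Complex.exp (-2 * -z) = 1 := by
      rw [← Complex.exp_add, show (-2*z) + (-2 * -z) = 0 by ring, Complex.exp_zero]
    have hz2 : Complex.exp (-2 * -z) ≠ 1 := by
      intro h; apply hz
      rw [h, mul_one] at hpq; exact hpq
    have hp : (1 : ℂ) - Complex.exp (-2*z) ≠ 0 := sub_ne_zero.mpr (Ne.symm hz)
    have hq : (1 : ℂ) - Complex.exp (-2 * -z) ≠ 0 := sub_ne_zero.mpr (Ne.symm hz2)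
    have h1 := heig (-n) z hz
    have h2 := heig n z hz
    have h3 := heig n (-z) hz2
    rw [if_neg (by omega : ¬ (0:ℤ) < -n)] at h1
    rw [if_pos (by omega : (0:ℤ) < n)] at h2
    rw [if_pos (by omega : (0:ℤ) < n)] at h3
    rw [neg_neg] at h3
    push_cast at h1
    have halg := alg (k:ℂ) (n:ℂ) (Complex.exp (-2*z)) (Complex.exp (-2 * -z))
      (deriv (E (-n)) z) (deriv (E n) z) (deriv (E n) (-z))
      (E (-n) z) (E (-n) (-z)) (E n z) (E n (-z))
      hpq hp hq hnk (by linear_combination h1) (by linear_combination h2)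
      (by linear_combination h3)
    rw [← hc0] at halg
    have hDz := Dsum z
    have hDnz := Dsum (-z)
    rw [neg_neg] at hDnz
    have hD'z := Dsum' z
    rw [hD'z, hDz, hDnz] at halg
    -- now bridge
    have hbridge : ∑ m ∈ B, b m * Complex.exp ((m:ℂ)*z)
        = (1 - Complex.exp (-2*z)) * ((∑ j ∈ B, a j * ((j:ℂ) * Complex.exp ((j:ℂ)*z)))
            + (n:ℂ) * ∑ j ∈ B, a j * Complex.exp ((j:ℂ)*z))
          + 2*(k:ℂ) * ((∑ j ∈ B, a j * Complex.exp ((j:ℂ)*z))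
            - ∑ j ∈ B, a j * Complex.exp ((j:ℂ)*(-z))) := by
      set F : ℤ → ℂ := fun j => a j * ((j:ℂ)+(n:ℂ))
          * (Complex.exp (-2*z) * Complex.exp ((j:ℂ)*z)) with hF
      set Gn : ℤ → ℂ := fun j => a j * Complex.exp ((j:ℂ)*(-z)) with hGn
      have hF0 : ∀ j : ℤ, n < |j| → F j = 0 := by
        intro j hj; rw [hF]; simp only; rw [ha_out j hj]; ring
      have step1 : ∑ m ∈ B, b m * Complex.exp ((m:ℂ)*z)
          = ∑ m ∈ B, (a m * ((m:ℂ)+(n:ℂ)+2*(k:ℂ)) * Complex.exp ((m:ℂ)*z))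
            - ∑ m ∈ B, F (m+2) - 2*(k:ℂ) * ∑ m ∈ B, Gn (-m) := by
        rw [Finset.mul_sum, ← Finset.sum_sub_distrib, ← Finset.sum_sub_distrib]
        refine Finset.sum_congr rfl (fun m _ => ?_)
        have eb : b m = a m * ((m:ℂ) + (n:ℂ) + 2*(k:ℂ))
            - a (m+2) * ((m:ℂ) + (n:ℂ) + 2) - 2*(k:ℂ) * a (-m) := rfl
        have eF : F (m+2) = a (m+2) * ((m:ℂ)+(n:ℂ)+2) * Complex.exp ((m:ℂ)*z) := by
          rw [hF]; simp only
          rw [show Complex.exp (-2*z) * Complex.exp (((m+2 : ℤ):ℂ)*z)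
              = Complex.exp ((m:ℂ)*z) by
            rw [← Complex.exp_add]; congr 1; push_cast; ring]
          push_cast; ring
        have eG : Gn (-m) = a (-m) * Complex.exp ((m:ℂ)*z) := by
          rw [hGn]; simp only
          rw [show (((-m : ℤ):ℂ))*(-z) = (m:ℂ)*z by push_cast; ring]
        rw [eb, eF, eG]; ring
      have step2 : ∑ m ∈ B, F (m+2) = ∑ j ∈ B, F j := by
        have e1 : ∑ j ∈ B, F j = ∑ j ∈ Finset.Icc (-n) n, F j := by
          refine (Finset.sum_subset hsubB (fun j hj hj2 => ?_)).symm
          refine hF0 j ?_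
          rw [Finset.mem_Icc] at hj2
          have := le_abs_self j; have := neg_abs_le j; omega
        have e2 : ∑ j ∈ Finset.Icc (-n) n, F j
            = ∑ m ∈ Finset.Icc (-n-2) (n-2), F (m+2) := sum_shift (-n) n F
        have e3 : ∑ m ∈ Finset.Icc (-n-2) (n-2), F (m+2) = ∑ m ∈ B, F (m+2) := by
          refine Finset.sum_subset (Finset.Icc_subset_Icc (by omega) (by omega)) ?_
          intro m hm hm2
          refine hF0 (m+2) ?_
          rw [Finset.mem_Icc] at hm2
          have := le_abs_self (m+2); have := neg_abs_le (m+2); omega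
        rw [e1, e2, e3]
      have step3 : ∑ m ∈ B, Gn (-m) = ∑ m ∈ B, Gn m := by
        rw [hB]; exact sum_neg_Icc (n+4) Gn
      have eA : ∑ m ∈ B, (a m * ((m:ℂ)+(n:ℂ)+2*(k:ℂ)) * Complex.exp ((m:ℂ)*z))
          = ∑ m ∈ B, a m * ((m:ℂ) * Complex.exp ((m:ℂ)*z))
            + (n:ℂ) * ∑ m ∈ B, a m * Complex.exp ((m:ℂ)*z)
            + 2*(k:ℂ) * ∑ m ∈ B, a m * Complex.exp ((m:ℂ)*z) := by
        rw [Finset.mul_sum, Finset.mul_sum, ← Finset.sum_add_distrib,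
          ← Finset.sum_add_distrib]
        exact Finset.sum_congr rfl (fun m _ => by ring)
      have eF : ∑ j ∈ B, F j
          = Complex.exp (-2*z) * (∑ m ∈ B, a m * ((m:ℂ) * Complex.exp ((m:ℂ)*z))
            + (n:ℂ) * ∑ m ∈ B, a m * Complex.exp ((m:ℂ)*z)) := by
        rw [Finset.mul_sum, ← Finset.sum_add_distrib, Finset.mul_sum]
        refine Finset.sum_congr rfl (fun m _ => ?_)
        rw [hF]; simp only; ring
      rw [step1, step2, step3, eA, eF]
      have eG : ∀ m : ℤ, Gn m = a m * Complex.exp ((m:ℂ)*(-z)) := fun m => rfl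
      simp only [eG]
      ring
    rw [hbridge]
    exact halg
  have hb0 : ∀ m ∈ B, b m = 0 :=
    expsum_coeffs B b (n+4) (fun j hj => by rw [hB, Finset.mem_Icc] at hj; omega) hkey
  have key1 : ∀ m : ℤ, 0 ≤ m → ((m:ℂ) + (n:ℂ) + 2*(k:ℂ)) ≠ 0 := by
    intro m hm
    have h0 : (0:ℝ) ≤ (m:ℝ) := by exact_mod_cast hm
    have h1 : ((m:ℝ) + (n:ℝ) + 2*k) ≠ 0 := by linarith
    have e : ((m:ℂ) + (n:ℂ) + 2*(k:ℂ)) = (((m:ℝ) + (n:ℝ) + 2*k : ℝ) : ℂ) := by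
      push_cast; ring
    rw [e]; exact Complex.ofReal_ne_zero.mpr h1
  have key2 : ∀ m : ℤ, m < n → ((n:ℂ) - (m:ℂ)) ≠ 0 := by
    intro m hm
    have e : (n:ℂ) - (m:ℂ) = (((n - m : ℤ)):ℂ) := by push_cast; ring
    rw [e]
    exact_mod_cast (by omega : (n - m : ℤ) ≠ 0)
  have hind : ∀ i : ℕ, ∀ j : ℤ, n - i ≤ |j| → a j = 0 := by
    intro i
    induction i with
    | zero =>
      intro j hj
      rcases lt_or_ge n |j| with h | h
      · exact ha_out j h
      · have hjn : |j| = n := le_antisymm h (by omega)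
        have han : a (-n) = 0 := by
          have e1 : ¬ hoOrd (-n) (-n) := by unfold hoOrd; omega
          have e2 : ¬ hoOrd n n := by unfold hoOrd; omega
          have e3 : ¬ hoOrd (-n) n := by unfold hoOrd; rw [habsneg, habs]; omega
          have v1 : t1 (-n) = 0 := by rw [ht1]; simp only; exact if_neg e1
          have v2 : t4 n = 0 := by rw [ht4]; simp only; exact if_neg e2
          have v3 : t4 (-n) = 0 := by rw [ht4]; simp only; exact if_neg e3
          have ea : a (-n) = t1 (-n) - t4 (-(-n)) - (if (-n : ℤ) = n then c0 else 0)
              - c0 * t4 (-n) := rfl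
          rw [ea, neg_neg, v1, v2, v3, if_neg (show ¬ (-n : ℤ) = n by omega)]; ring
        have hann : a n = 0 := by
          have hbn := hb0 n hnB
          have eb : b n = a n * ((n:ℂ) + (n:ℂ) + 2*(k:ℂ))
              - a (n+2) * ((n:ℂ) + (n:ℂ) + 2) - 2*(k:ℂ) * a (-n) := rfl
          rw [eb, ha_out (n+2) (by rw [abs_of_pos (by omega)]; omega), han] at hbn
          have h2 : a n * ((n:ℂ) + (n:ℂ) + 2*(k:ℂ)) = 0 := by linear_combination hbn
          exact (mul_eq_zero.1 h2).resolve_right (key1 n (by omega))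
        rcases (abs_eq (by omega : (0:ℤ) ≤ n)).1 hjn with rfl | rfl
        exacts [hann, han]
    | succ i ih =>
      intro j hj
      rcases le_or_gt ((n:ℤ) - i) |j| with h | h
      · exact ih j h
      · have habj := abs_nonneg j
        set m : ℤ := n - i - 1 with hm
        have hjm : |j| = m := by push_cast at hj; omega
        have hm0 : 0 ≤ m := by omega
        have hmn : m < n := by have : (0:ℤ) ≤ (i:ℤ) := Int.natCast_nonneg i; omega
        have hIH2 : a (m+2) = 0 := ih (m+2) (by rw [abs_of_nonneg (by omega)]; omega)
        have hIHm2 : a (-m-2) = 0 := ih (-m-2) (by rw [abs_of_nonpos (by omega)]; omega)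
        have hneg : a (-m) = 0 := by
          have hbm := hb0 (-m-2) (by rw [hB, Finset.mem_Icc]; omega)
          have eb : b (-m-2) = a (-m-2) * (((-m-2 : ℤ):ℂ) + (n:ℂ) + 2*(k:ℂ))
              - a ((-m-2)+2) * (((-m-2 : ℤ):ℂ) + (n:ℂ) + 2) - 2*(k:ℂ) * a (-(-m-2)) := rfl
          rw [eb, show (-m-2)+2 = -m by ring, show -(-m-2) = m+2 by ring,
            hIHm2, hIH2] at hbm
          have h2 : a (-m) * ((n:ℂ) - (m:ℂ)) = 0 := by
            push_cast at hbm ⊢; linear_combination -hbm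
          exact (mul_eq_zero.1 h2).resolve_right (key2 m hmn)
        have hpos : a m = 0 := by
          have hbm := hb0 m (by rw [hB, Finset.mem_Icc]; omega)
          have eb : b m = a m * ((m:ℂ) + (n:ℂ) + 2*(k:ℂ))
              - a (m+2) * ((m:ℂ) + (n:ℂ) + 2) - 2*(k:ℂ) * a (-m) := rfl
          rw [eb, hIH2, hneg] at hbm
          have h2 : a m * ((m:ℂ) + (n:ℂ) + 2*(k:ℂ)) = 0 := by linear_combination hbm
          exact (mul_eq_zero.1 h2).resolve_right (key1 m hm0)
        rcases (abs_eq hm0).1 hjm with rfl | rfl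
        exacts [hpos, hneg]
  intro x
  have hzx := Dsum x
  have hzero : ∑ j ∈ B, a j * Complex.exp ((j:ℂ)*x) = 0 :=
    Finset.sum_eq_zero (fun j _ => by
      rw [hind n.toNat j (by
        rw [Int.toNat_of_nonneg (by omega : (0:ℤ) ≤ n)]
        simpa using abs_nonneg j), zero_mul])
  rw [hzero] at hzx
  linear_combination hzx
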